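/- Suppose $\|x_n - Tx_n\| \leq \kappa \sigma(\tau_n) + \sum_{i=1}^n 2\alpha_i\epsilon_i \sigma(\tau_n - \tau_i) + 2\epsilon_{n+1}$ where $\sigma(y) = \min\{1, (\pi y)^{-1/2}\}$, $\tau_n = \sum_{k=1}^n \alpha_k(1-\alpha_k)$ with $\alpha_k(1-\alpha_k) \geq \beta > 0$ for all $k$, and $\epsilon_k = \|e_k\|$ with $\sum_{k\geq 1}\|e_k\| < \infty$. Then with $\nu = (\kappa + 2\sqrt{2}\sum_{k\geq 1}\|e_k\|)/\sqrt{\pi\beta}$, for all $n \geq 1$: $\|x_n - Tx_n\| \leq \nu/\sqrt{n} + \sum_{i \geq \lfloor n/2 \rfloor} 2\|e_i\|$. -/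

import Mathlib

open Finset

/-- `σ(y) = min{1, 1/√(π y)}` for `y > 0`, with `σ(y) = 1` for `y ≤ 0`. -/
noncomputable def sigmaKM (y : ℝ) : ℝ :=
  if y ≤ 0 then 1 else min 1 (1 / Real.sqrt (Real.pi * y))

/-- `τ n = ∑_{k=1}^n α k (1 - α k)`. -/
noncomputable def tauKM (α : ℕ → ℝ) (n : ℕ) : ℝ :=
  ∑ k ∈ Finset.Icc 1 n, α k * (1 - α k)

lemma sigmaKM_le_one (y : ℝ) : sigmaKM y ≤ 1 := by
  unfold sigmaKM
  split
  · exact le_rfl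
  · exact min_le_left _ _

lemma sigmaKM_nonneg (y : ℝ) : 0 ≤ sigmaKM y := by
  unfold sigmaKM
  split
  · norm_num
  · exact le_min zero_le_one (by positivity)

lemma sigmaKM_le {y c : ℝ} (hc : 0 < c) (hcy : c ≤ y) :
    sigmaKM y ≤ 1 / Real.sqrt (Real.pi * c) := by
  have hy : 0 < y := hc.trans_le hcy
  unfold sigmaKM
  rw [if_neg (not_le.2 hy)]
  refine (min_le_right _ _).trans ?_
  have hπ := Real.pi_pos
  apply one_div_le_one_div_of_le
  · positivity
  · exact Real.sqrt_le_sqrt (by nlinarith)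

lemma tauKM_sub_lower (α : ℕ → ℝ) (β : ℝ) (hαβ : ∀ k, β ≤ α k * (1 - α k))
    {i n : ℕ} (h : i ≤ n) :
    ((n - i : ℕ) : ℝ) * β ≤ tauKM α n - tauKM α i := by
  have hIcc : ∀ m : ℕ, Finset.Icc 1 m = Finset.Ioc 0 m := fun m => Finset.Icc_add_one_left_eq_Ioc 0 m
  have hsplit : tauKM α i + ∑ k ∈ Finset.Ioc i n, α k * (1 - α k) = tauKM α n := by
    unfold tauKM
    rw [hIcc, hIcc]
    exact Finset.sum_Ioc_consecutive _ (Nat.zero_le i) h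
  have hlow : ((n - i : ℕ) : ℝ) * β ≤ ∑ k ∈ Finset.Ioc i n, α k * (1 - α k) := by
    have := Finset.card_nsmul_le_sum (Finset.Ioc i n) (fun k => α k * (1 - α k)) β
      (fun k _ => hαβ k)
    rwa [Nat.card_Ioc, nsmul_eq_mul] at this
  linarith

theorem stmt11 {X : Type*} [NormedAddCommGroup X] [NormedSpace ℝ X]
    (T : X → X) (x : ℕ → X) (e : ℕ → X)
    (α : ℕ → ℝ) (hα : ∀ n, α n ∈ Set.Icc (0:ℝ) 1)
    (β : ℝ) (hβ : 0 < β) (hαβ : ∀ k, β ≤ α k * (1 - α k))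
    (hsum : Summable (fun k => ‖e (k + 1)‖))
    (κ : ℝ) (hκ : 0 ≤ κ)
    (hbound : ∀ n, ‖x n - T (x n)‖
      ≤ κ * sigmaKM (tauKM α n)
        + ∑ i ∈ Finset.Icc 1 n, 2 * α i * ‖e i‖ * sigmaKM (tauKM α n - tauKM α i)
        + 2 * ‖e (n + 1)‖) :
    ∀ n : ℕ, 1 ≤ n → ‖x n - T (x n)‖
      ≤ (κ + 2 * Real.sqrt 2 * ∑' k : ℕ, ‖e (k + 1)‖) / Real.sqrt (Real.pi * β)
          / Real.sqrt n
        + ∑' i : ℕ, 2 * ‖e (n / 2 + i)‖ := by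
  intro n hn
  have hπ := Real.pi_pos
  have hn' : (0:ℝ) < n := by exact_mod_cast hn
  set m := n / 2 with hm
  have hmn : m ≤ n := Nat.div_le_self n 2
  set E : ℝ := ∑' k : ℕ, ‖e (k + 1)‖ with hE
  have hsum0 : Summable (fun k => ‖e k‖) := (summable_nat_add_iff (f := fun k => ‖e k‖) 1).mp hsum
  have hE0 : 0 ≤ E := tsum_nonneg fun _ => norm_nonneg _
  have hsqn : 0 < Real.sqrt n := Real.sqrt_pos.2 hn'
  have hsqπβ : 0 < Real.sqrt (Real.pi * β) := Real.sqrt_pos.2 (by positivity)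
  -- half lower bound : (n : ℝ)/2 ≤ (n - m : ℕ)
  have hhalf : (n:ℝ)/2 ≤ ((n - m : ℕ) : ℝ) := by
    have h1 : ((m:ℕ):ℝ) ≤ (n:ℝ)/2 := by
      have := Nat.cast_div_le (α := ℝ) (m := n) (n := 2)
      simpa using this
    have h2 : ((n - m : ℕ) : ℝ) = (n:ℝ) - (m:ℝ) := by
      push_cast [Nat.cast_sub hmn]; ring
    linarith
  -- κ term
  have hκterm : κ * sigmaKM (tauKM α n)
      ≤ κ / Real.sqrt (Real.pi * β) / Real.sqrt n := by
    have htau0 : tauKM α 0 = 0 := by simp [tauKM]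
    have hτ : (n:ℝ) * β ≤ tauKM α n := by
      have := tauKM_sub_lower α β hαβ (Nat.zero_le n)
      rw [htau0] at this
      simpa using this
    have hσ : sigmaKM (tauKM α n) ≤ 1 / Real.sqrt (Real.pi * ((n:ℝ) * β)) :=
      sigmaKM_le (by positivity) hτ
    have heq : Real.sqrt (Real.pi * ((n:ℝ) * β))
        = Real.sqrt (Real.pi * β) * Real.sqrt n := by
      rw [show Real.pi * ((n:ℝ) * β) = (Real.pi * β) * (n:ℝ) by ring,
        Real.sqrt_mul (by positivity)]
    calc κ * sigmaKM (tauKM α n) ≤ κ * (1 / Real.sqrt (Real.pi * ((n:ℝ) * β))) :=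
          mul_le_mul_of_nonneg_left hσ hκ
      _ = κ / Real.sqrt (Real.pi * β) / Real.sqrt n := by
          rw [heq, div_div]; ring
  -- the constant D for the early part of the sum
  set D : ℝ := Real.sqrt 2 / Real.sqrt (Real.pi * β) / Real.sqrt n with hD
  have hD0 : 0 ≤ D := by positivity
  have hDeq : 1 / Real.sqrt (Real.pi * ((n:ℝ)/2 * β)) = D := by
    rw [hD, show Real.pi * ((n:ℝ)/2 * β) = (Real.pi * β) * (n:ℝ) / 2 by ring,
      Real.sqrt_div (by positivity), Real.sqrt_mul (by positivity),
      one_div_div, div_div]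
  -- split the sum
  have hsplit : ∑ i ∈ Finset.Icc 1 n, 2 * α i * ‖e i‖ * sigmaKM (tauKM α n - tauKM α i)
      = (∑ i ∈ Finset.Ioc 0 m, 2 * α i * ‖e i‖ * sigmaKM (tauKM α n - tauKM α i))
        + ∑ i ∈ Finset.Ioc m n, 2 * α i * ‖e i‖ * sigmaKM (tauKM α n - tauKM α i) := by
    rw [(by exact Finset.Icc_add_one_left_eq_Ioc 0 n : Finset.Icc 1 n = Finset.Ioc 0 n), ← Finset.sum_Ioc_consecutive _ (Nat.zero_le m) hmn]
  -- early part
  have hearly : ∑ i ∈ Finset.Ioc 0 m, 2 * α i * ‖e i‖ * sigmaKM (tauKM α n - tauKM α i)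
      ≤ 2 * Real.sqrt 2 * E / Real.sqrt (Real.pi * β) / Real.sqrt n := by
    have hstep : ∑ i ∈ Finset.Ioc 0 m, 2 * α i * ‖e i‖ * sigmaKM (tauKM α n - tauKM α i)
        ≤ ∑ i ∈ Finset.Ioc 0 m, 2 * ‖e i‖ * D := by
      refine Finset.sum_le_sum fun i hi => ?_
      have him : i ≤ m := (Finset.mem_Ioc.mp hi).2
      have hin : i ≤ n := him.trans hmn
      have hτ : (n:ℝ)/2 * β ≤ tauKM α n - tauKM α i := by
        have h1 := tauKM_sub_lower α β hαβ hin
        have h2 : ((n - m : ℕ) : ℝ) ≤ ((n - i : ℕ) : ℝ) := by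
          exact_mod_cast Nat.sub_le_sub_left him n
        nlinarith
      have hσ : sigmaKM (tauKM α n - tauKM α i) ≤ D := by
        rw [← hDeq]; exact sigmaKM_le (by positivity) hτ
      have hαi := hα i
      have h0σ := sigmaKM_nonneg (tauKM α n - tauKM α i)
      have h1 : 2 * α i * ‖e i‖ ≤ 2 * ‖e i‖ := by
        have := hαi.2
        nlinarith [norm_nonneg (e i), hαi.1]
      exact mul_le_mul h1 hσ h0σ (by positivity)
    refine hstep.trans ?_
    have hsum_le : ∑ i ∈ Finset.Ioc 0 m, ‖e i‖ ≤ E := by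
      have hre : ∑ i ∈ Finset.Ioc 0 m, ‖e i‖ = ∑ j ∈ Finset.range m, ‖e (j + 1)‖ := by
        rw [show Finset.Ioc 0 m = Finset.Ico 1 (m + 1) by
          rw [← (by exact Finset.Icc_add_one_left_eq_Ioc 0 m : Finset.Icc 1 m = Finset.Ioc 0 m), Finset.Ico_add_one_right_eq_Icc],
          Finset.sum_Ico_eq_sum_range]
        simp [add_comm]
      rw [hre]
      exact hsum.sum_le_tsum _ (fun _ _ => norm_nonneg _)
    calc ∑ i ∈ Finset.Ioc 0 m, 2 * ‖e i‖ * D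
        = (∑ i ∈ Finset.Ioc 0 m, ‖e i‖) * (2 * D) := by
          rw [Finset.sum_mul]; exact Finset.sum_congr rfl fun i _ => by ring
      _ ≤ E * (2 * D) := by
          apply mul_le_mul_of_nonneg_right hsum_le (by positivity)
      _ = 2 * Real.sqrt 2 * E / Real.sqrt (Real.pi * β) / Real.sqrt n := by
          rw [hD]; ring
  -- late part plus the last error term
  have hlate : (∑ i ∈ Finset.Ioc m n, 2 * α i * ‖e i‖ * sigmaKM (tauKM α n - tauKM α i))
      + 2 * ‖e (n + 1)‖ ≤ ∑' i : ℕ, 2 * ‖e (m + i)‖ := by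
    have hstep : ∑ i ∈ Finset.Ioc m n, 2 * α i * ‖e i‖ * sigmaKM (tauKM α n - tauKM α i)
        ≤ ∑ i ∈ Finset.Ioc m n, 2 * ‖e i‖ := by
      refine Finset.sum_le_sum fun i _ => ?_
      have hαi := hα i
      have h1 : 2 * α i * ‖e i‖ ≤ 2 * ‖e i‖ := by
        nlinarith [norm_nonneg (e i), hαi.1, hαi.2]
      calc 2 * α i * ‖e i‖ * sigmaKM (tauKM α n - tauKM α i)
          ≤ 2 * α i * ‖e i‖ * 1 := by
            apply mul_le_mul_of_nonneg_left (sigmaKM_le_one _)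
            nlinarith [norm_nonneg (e i), hαi.1]
        _ = 2 * α i * ‖e i‖ := mul_one _
        _ ≤ 2 * ‖e i‖ := h1
    have hcomb : (∑ i ∈ Finset.Ioc m n, 2 * ‖e i‖) + 2 * ‖e (n + 1)‖
        = ∑ i ∈ Finset.Ioc m (n + 1), 2 * ‖e i‖ := by
      rw [Finset.sum_Ioc_succ_top hmn]
    have hg : Summable (fun i : ℕ => 2 * ‖e (m + i)‖) := by
      have : Summable (fun i : ℕ => ‖e (i + m)‖) := (summable_nat_add_iff (f := fun k => ‖e k‖) m).2 hsum0
      exact ((this.mul_left 2).congr (fun i => by rw [add_comm i m]))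
    have hfin : ∑ i ∈ Finset.Ioc m (n + 1), 2 * ‖e i‖
        ≤ ∑' i : ℕ, 2 * ‖e (m + i)‖ := by
      have hre : ∑ i ∈ Finset.Ioc m (n + 1), 2 * ‖e i‖
          = ∑ j ∈ Finset.range (n + 1 - m), 2 * ‖e (m + (j + 1))‖ := by
        rw [show Finset.Ioc m (n + 1) = Finset.Ico (m + 1) (n + 2) by
          rw [← Finset.Icc_add_one_left_eq_Ioc, (by exact Finset.Ico_add_one_right_eq_Icc (m + 1) (n + 1) : Finset.Ico (m + 1) (n + 2) = Finset.Icc (m + 1) (n + 1))],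
          Finset.sum_Ico_eq_sum_range]
        have : n + 2 - (m + 1) = n + 1 - m := by omega
        rw [this]
        exact Finset.sum_congr rfl fun j _ => by rw [show m + 1 + j = m + (j + 1) by omega]
      rw [hre]
      have hgs : Summable (fun j : ℕ => 2 * ‖e (m + (j + 1))‖) := by
        have := (summable_nat_add_iff (f := fun i : ℕ => 2 * ‖e (m + i)‖) 1).2 hg
        exact this.congr fun j => by rw [show m + (j + 1) = m + j + 1 by omega]
      have h1 : ∑ j ∈ Finset.range (n + 1 - m), 2 * ‖e (m + (j + 1))‖
          ≤ ∑' j : ℕ, 2 * ‖e (m + (j + 1))‖ :=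
        hgs.sum_le_tsum _ (fun _ _ => by positivity)
      have h2 : ∑' j : ℕ, 2 * ‖e (m + (j + 1))‖ ≤ ∑' i : ℕ, 2 * ‖e (m + i)‖ := by
        rw [hg.tsum_eq_zero_add]
        exact le_add_of_nonneg_left (by positivity)
      exact h1.trans h2
    linarith
  have hb := hbound n
  have hfinal : (κ + 2 * Real.sqrt 2 * E) / Real.sqrt (Real.pi * β) / Real.sqrt n
      = κ / Real.sqrt (Real.pi * β) / Real.sqrt n
        + 2 * Real.sqrt 2 * E / Real.sqrt (Real.pi * β) / Real.sqrt n := by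
    rw [add_div, add_div]
  rw [hfinal]
  rw [hsplit] at hb
  linarith
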